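/- Let r > 0 and let M be the smallest positive integer greater than 1/(4r²) that is expressible as a sum of two squares of relatively prime positive integers. Then for any relatively prime positive integers p, q and any a ∈ (0,1) with pa ∉ ℤ such that the r-neighborhood of the orbit of γ(a, p/q) covers the unit square, we have p² + q² ≥ M; moreover p² + q² = M is achievable by choosing p, q with p² + q² = M and a = 1/(2p). -/

import Mathlib

open Set

/-- The folding map on one coordinate. -/
noncomputable def fold (t : ℝ) : ℝ := if Even ⌊t⌋ then Int.fract t else 1 - Int.fract t

/-- A point of the Euclidean plane. -/
noncomputable def pt (x y : ℝ) : EuclideanSpace ℝ (Fin 2) := WithLp.toLp 2 ![x, y]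

/-- The orbit of the billiard trajectory γ(a, p/q) in the unit square, obtained by folding
the unfolded ray `y = (p/q)(x - a), y ≥ 0` back into the square. -/
noncomputable def billiardOrbit (a : ℝ) (p q : ℕ) : Set (EuclideanSpace ℝ (Fin 2)) :=
  {z | ∃ x y : ℝ, 0 ≤ y ∧ y = ((p : ℝ) / q) * (x - a) ∧ z = pt (fold x) (fold y)}

/-- The unit square [0,1]² in the Euclidean plane. -/
def unitSquare : Set (EuclideanSpace ℝ (Fin 2)) :=
  {z | z 0 ∈ Icc (0:ℝ) 1 ∧ z 1 ∈ Icc (0:ℝ) 1}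

/-- Optimal covering radius of a set: the infimum of r > 0 whose open r-neighborhood
covers the unit square. -/
noncomputable def rcov (S : Set (EuclideanSpace ℝ (Fin 2))) : ℝ :=
  sInf {r : ℝ | 0 < r ∧ unitSquare ⊆ Metric.thickening r S}

lemma abs_helper (f : ℝ) (hf0 : 0 ≤ f) (hf1 : f ≤ 1) (J : ℤ) :
    (Even J → f ≤ |f + J|) ∧ (Odd J → 1 - f ≤ |f + J|) := by
  constructor
  · rintro ⟨j, rfl⟩
    rcases le_or_gt 0 j with h | h
    · have : (0:ℝ) ≤ (j:ℝ) := by exact_mod_cast h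
      rw [abs_of_nonneg (by push_cast; linarith)]
      push_cast; linarith
    · have hj : j ≤ -1 := by omega
      have : (j:ℝ) ≤ -1 := by exact_mod_cast hj
      rw [abs_of_nonpos (by push_cast; linarith)]
      push_cast; linarith
  · rintro ⟨j, rfl⟩
    rcases le_or_gt 0 j with h | h
    · have : (0:ℝ) ≤ (j:ℝ) := by exact_mod_cast h
      rw [abs_of_nonneg (by push_cast; linarith)]
      push_cast; linarith
    · have hj : j ≤ -1 := by omega
      have : (j:ℝ) ≤ -1 := by exact_mod_cast hj
      rw [abs_of_nonpos (by push_cast; linarith)]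
      push_cast; linarith

lemma fold_nonneg (t : ℝ) : 0 ≤ fold t := by
  unfold fold; split
  · exact Int.fract_nonneg t
  · have := Int.fract_lt_one t; linarith

lemma fold_le_one (t : ℝ) : fold t ≤ 1 := by
  unfold fold; split
  · have := Int.fract_lt_one t; linarith
  · have := Int.fract_nonneg t; linarith

lemma fold_le (t : ℝ) (k : ℤ) : fold t ≤ |t - 2*k| := by
  have hfl : (⌊t⌋:ℝ) + Int.fract t = t := Int.floor_add_fract t
  have h0 := Int.fract_nonneg t
  have h1 := (Int.fract_lt_one t).le
  have key := abs_helper (Int.fract t) h0 h1 (⌊t⌋ - 2*k)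
  have habs : |Int.fract t + ((⌊t⌋ - 2*k : ℤ):ℝ)| = |t - 2*k| := by
    congr 1; push_cast; linarith
  unfold fold; split
  · rename_i h
    have : Even (⌊t⌋ - 2*k) := by
      rcases h with ⟨j, hj⟩; exact ⟨j - k, by omega⟩
    have := key.1 this; rw [habs] at this; linarith
  · rename_i h
    have : Odd (⌊t⌋ - 2*k) := by
      rw [Int.not_even_iff_odd] at h; rcases h with ⟨j, hj⟩; exact ⟨j - k, by omega⟩
    have := key.2 this; rw [habs] at this; linarith

lemma fold_branch (t : ℝ) : (∃ k:ℤ, fold t = t + 2*k) ∨ (∃ k:ℤ, fold t = -t + 2*k) := by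
  have hfl : (⌊t⌋:ℝ) + Int.fract t = t := Int.floor_add_fract t
  unfold fold; split
  · rename_i h
    rcases h with ⟨j, hj⟩
    left; refine ⟨-j, ?_⟩
    have hj2 : ⌊t⌋ = 2*j := by omega
    have : ((⌊t⌋:ℤ):ℝ) = 2*(j:ℝ) := by exact_mod_cast congrArg (fun z : ℤ => (z:ℝ)) hj2
    push_cast; linarith
  · rename_i h
    rw [Int.not_even_iff_odd] at h
    rcases h with ⟨j, hj⟩
    right; refine ⟨j + 1, ?_⟩
    have hj2 : ⌊t⌋ = 2*j+1 := by omega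
    have : ((⌊t⌋:ℤ):ℝ) = 2*(j:ℝ)+1 := by exact_mod_cast congrArg (fun z : ℤ => (z:ℝ)) hj2
    push_cast; linarith

lemma fold_exists (t : ℝ) : ∃ k : ℤ, fold t = |t - 2*k| := by
  rcases fold_branch t with ⟨k, hk⟩ | ⟨k, hk⟩
  · refine ⟨-k, ?_⟩
    rw [abs_of_nonneg (by rw [show t - 2*(-k:ℤ) = t + 2*k by push_cast; ring, ← hk]; exact fold_nonneg t)]
    push_cast; linarith
  · refine ⟨k, ?_⟩
    rw [abs_of_nonpos (by rw [show t - 2*(k:ℤ) = -(-t + 2*k) by push_cast; ring, ← hk]; simpa using fold_nonneg t)]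
    push_cast; linarith

lemma fold_lip (s t : ℝ) : |fold s - fold t| ≤ |s - t| := by
  rcases fold_exists s with ⟨k, hk⟩
  rcases fold_exists t with ⟨l, hl⟩
  have h1 : fold s - fold t ≤ |s - t| := by
    have := fold_le s l
    rw [hl]
    have : fold s ≤ |s - t| + |t - 2*l| :=
      le_trans (fold_le s l) (by
        calc |s - 2*l| = |(s - t) + (t - 2*l)| := by ring_nf
          _ ≤ |s - t| + |t - 2*l| := abs_add_le _ _)
    linarith
  have h2 : fold t - fold s ≤ |s - t| := by
    rw [hk]
    have : fold t ≤ |s - t| + |s - 2*k| :=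
      le_trans (fold_le t k) (by
        calc |t - 2*k| = |-(s - t) + (s - 2*k)| := by ring_nf
          _ ≤ |-(s-t)| + |s - 2*k| := abs_add_le _ _
          _ = |s - t| + |s - 2*k| := by rw [abs_neg])
    linarith
  exact abs_sub_le_iff.mpr ⟨h1, h2⟩

lemma fold_eq_of (s t : ℝ) (k : ℤ) (h : s = t + 2*k ∨ s = -t + 2*k) : fold s = fold t := by
  rcases fold_exists s with ⟨j, hj⟩
  rcases fold_exists t with ⟨l, hl⟩
  rcases h with h | h
  · have h1 : fold s ≤ fold t := by
      rw [hl]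
      have := fold_le s (l + k)
      have he : |s - 2*((l:ℝ) + k)| = |t - 2*l| := by rw [h]; ring_nf
      push_cast at this; rw [he] at this; exact this
    have h2 : fold t ≤ fold s := by
      rw [hj]
      have := fold_le t (j - k)
      have he : |t - 2*((j:ℝ) - k)| = |s - 2*j| := by rw [h]; ring_nf
      push_cast at this; rw [he] at this; exact this
    linarith
  · have h1 : fold s ≤ fold t := by
      rw [hl]
      have := fold_le s (k - l)
      have he : |s - 2*((k:ℝ) - l)| = |t - 2*l| := by rw [h, show -t + 2*(k:ℝ) - 2*((k:ℝ)-l) = -(t - 2*l) by ring, abs_neg]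
      push_cast at this; rw [he] at this; exact this
    have h2 : fold t ≤ fold s := by
      rw [hj]
      have := fold_le t (k - j)
      have he : |t - 2*((k:ℝ) - j)| = |s - 2*j| := by
        rw [show t = -s + 2*(k:ℝ) by rw [h]; ring, show -s + 2*(k:ℝ) - 2*((k:ℝ)-j) = -(s - 2*j) by ring, abs_neg]
      push_cast at this; rw [he] at this; exact this
    linarith

lemma fold_eq_self {u : ℝ} (h0 : 0 ≤ u) (h1 : u ≤ 1) : fold u = u := by
  have hle : fold u ≤ u := by
    have := fold_le u 0
    simp only [Int.cast_zero, mul_zero, sub_zero] at this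
    rwa [abs_of_nonneg h0] at this
  have hge : u ≤ fold u := by
    rcases fold_exists u with ⟨k, hk⟩
    rw [hk]
    rcases le_or_gt k 0 with h | h
    · have : (k:ℝ) ≤ 0 := by exact_mod_cast h
      rw [abs_of_nonneg (by linarith)]; linarith
    · have : (1:ℝ) ≤ (k:ℝ) := by exact_mod_cast h
      rw [abs_of_nonpos (by linarith)]; linarith
  linarith



lemma half_lemma (d : ℝ) : ∃ K : ℤ, |d + 2*K| ≤ 1/2 ∨ |(-d - 1) + 2*K| ≤ 1/2 := by
  set R := round (d/2) with hR
  have h := abs_sub_round (d/2)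
  rw [abs_le] at h
  set e := d - 2*R with he
  rcases le_or_gt e (1/2) with h1 | h1
  · rcases le_or_gt (-(1/2)) e with h2 | h2
    · exact ⟨-R, Or.inl (by rw [abs_le]; push_cast; constructor <;> linarith)⟩
    · -- e < -1/2, and e ≥ -1
      refine ⟨R, Or.inr ?_⟩
      rw [abs_le]; push_cast; constructor <;> linarith
  · -- e > 1/2, e ≤ 1
    refine ⟨R + 1, Or.inr ?_⟩
    rw [abs_le]; push_cast; constructor <;> linarith

lemma bezout (p q : ℕ) (h : Nat.Coprime p q) (K : ℤ) : ∃ m n : ℤ, p*m - q*n = K := by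
  have hg : (Nat.gcd p q : ℤ) = p * Nat.gcdA p q + q * Nat.gcdB p q := Nat.gcd_eq_gcd_ab p q
  rw [h] at hg
  exact ⟨Nat.gcdA p q * K, -(Nat.gcdB p q * K), by push_cast at hg ⊢; linear_combination (-K) * hg⟩

lemma dist_pt (z : EuclideanSpace ℝ (Fin 2)) (x y : ℝ) :
    dist z (pt x y) = Real.sqrt ((z 0 - x)^2 + (z 1 - y)^2) := by
  rw [EuclideanSpace.dist_eq, Fin.sum_univ_two]
  simp [pt, Real.dist_eq, sq_abs]

set_option maxHeartbeats 1000000 in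
lemma cover_of (p q : ℕ) (hp : 0 < p) (hq : 0 < q) (hcop : Nat.Coprime p q) (r : ℝ)
    (hr : 0 < r) (hN : 1 / (4 * r ^ 2) < ((p:ℝ)^2 + (q:ℝ)^2)) :
    unitSquare ⊆ Metric.thickening r (billiardOrbit (1/(2*(p:ℝ))) p q) := by
  have hp0 : (0:ℝ) < p := by exact_mod_cast hp
  have hq0 : (0:ℝ) < q := by exact_mod_cast hq
  obtain ⟨N, hNdef⟩ : ∃ N:ℝ, N = (p:ℝ)^2 + (q:ℝ)^2 := ⟨_, rfl⟩
  rw [← hNdef] at hN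
  have hN0 : (0:ℝ) < N := by rw [hNdef]; positivity
  have hs0 : 0 < Real.sqrt N := Real.sqrt_pos.mpr hN0
  have hrN : 1/(2*Real.sqrt N) < r := by
    have h1 : 1/(2*r) < Real.sqrt N := by
      have h2 : (1/(2*r))^2 < N := by
        have h3 : (1/(2*r))^2 = 1/(4*r^2) := by ring
        linarith [h3 ▸ hN]
      calc 1/(2*r) = Real.sqrt ((1/(2*r))^2) := (Real.sqrt_sq (by positivity)).symm
        _ < Real.sqrt N := Real.sqrt_lt_sqrt (by positivity) h2
    rw [div_lt_iff₀ (by positivity)] at h1 ⊢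
    calc (1:ℝ) < Real.sqrt N * (2*r) := h1
      _ = r * (2*Real.sqrt N) := by ring
  intro z hz
  obtain ⟨⟨hu0, hu1⟩, hv0, hv1⟩ := hz
  obtain ⟨K, hK⟩ := half_lemma ((p:ℝ)*(z 0) - q*(z 1) - 1/2)
  obtain ⟨ε, hε, η, hηdef, hηle⟩ :
      ∃ ε : ℝ, (ε = 1 ∨ ε = -1) ∧ ∃ η : ℝ,
        η = (p:ℝ)*(ε*(z 0)) - q*(ε*(z 1)) - 1/2 + 2*K ∧ |η| ≤ 1/2 := by
    rcases hK with h | h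
    · exact ⟨1, Or.inl rfl, ((p:ℝ)*(z 0) - q*(z 1) - 1/2) + 2*K, by ring, h⟩
    · exact ⟨-1, Or.inr rfl, (-((p:ℝ)*(z 0) - q*(z 1) - 1/2) - 1) + 2*K, by ring, h⟩
  obtain ⟨m, n, hmn⟩ := bezout p q hcop K
  obtain ⟨U, hU⟩ : ∃ U:ℝ, U = ε*(z 0) + 2*m := ⟨_, rfl⟩
  obtain ⟨V, hV⟩ : ∃ V:ℝ, V = ε*(z 1) + 2*n := ⟨_, rfl⟩
  have hUV : (p:ℝ)*U - q*V - 1/2 = η := by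
    have hmn' : (p:ℝ)*m - q*n = (K:ℝ) := by exact_mod_cast congrArg (fun w : ℤ => (w:ℝ)) hmn
    rw [hηdef, hU, hV]; linear_combination 2*hmn'
  obtain ⟨D, hD⟩ : ∃ D:ℝ, D = η / N := ⟨_, rfl⟩
  have hDN : D*N = η := by rw [hD]; field_simp
  obtain ⟨X, hX⟩ : ∃ X:ℝ, X = U - D*p := ⟨_, rfl⟩
  obtain ⟨Y, hY⟩ : ∃ Y:ℝ, Y = V + D*q := ⟨_, rfl⟩
  have hXY : (p:ℝ)*X - q*Y = 1/2 := by
    rw [hX, hY]; linear_combination hUV - hDN + D*hNdef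
  obtain ⟨L, hL⟩ : ∃ L:ℤ, (L:ℤ) = ⌈max 0 (-Y)⌉ := ⟨_, rfl⟩
  have hL0 : (0:ℝ) ≤ (L:ℝ) := by
    have : (0:ℤ) ≤ L := hL ▸ Int.ceil_nonneg (le_max_left _ _)
    exact_mod_cast this
  have hLY : -Y ≤ (L:ℝ) := by
    rw [hL]; exact le_trans (le_max_right _ _) (Int.le_ceil _)
  obtain ⟨X', hX'⟩ : ∃ W:ℝ, W = X + 2*q*L := ⟨_, rfl⟩
  obtain ⟨Y', hY'⟩ : ∃ W:ℝ, W = Y + 2*p*L := ⟨_, rfl⟩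
  have hY'0 : 0 ≤ Y' := by
    rw [hY']
    have h1 : (1:ℝ) ≤ 2*p := by
      have : (1:ℝ) ≤ p := by exact_mod_cast hp
      linarith
    have h2 : (L:ℝ)*1 ≤ (L:ℝ)*(2*p) := mul_le_mul_of_nonneg_left h1 hL0
    linarith
  have hline' : (p:ℝ)*X' - q*Y' = 1/2 := by rw [hX', hY']; ring_nf; linarith [hXY]
  have hmem : pt (fold X') (fold Y') ∈ billiardOrbit (1/(2*(p:ℝ))) p q := by
    refine ⟨X', Y', hY'0, ?_, rfl⟩
    have hpa : (p:ℝ)*(1/(2*(p:ℝ))) = 1/2 := by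
      rw [mul_one_div, div_eq_div_iff (by positivity) (by norm_num : (2:ℝ) ≠ 0)]; ring
    have h5 : (p:ℝ)*(X' - 1/(2*(p:ℝ))) = q*Y' := by rw [mul_sub, hpa]; linarith [hline']
    symm
    rw [div_mul_eq_mul_div, h5, mul_comm (q:ℝ) Y', mul_div_assoc, div_self hq0.ne', mul_one]
  rw [Metric.mem_thickening_iff]
  refine ⟨pt (fold X') (fold Y'), hmem, ?_⟩
  have hfX : fold X' = fold X := fold_eq_of X' X (q*L) (Or.inl (by push_cast [hX']; ring))
  have hfY : fold Y' = fold Y := fold_eq_of Y' Y (p*L) (Or.inl (by push_cast [hY']; ring))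
  have hfU : fold U = z 0 := by
    have h1 : fold U = fold (z 0) := by
      rcases hε with rfl | rfl
      · exact fold_eq_of U (z 0) m (Or.inl (by rw [hU]; ring))
      · exact fold_eq_of U (z 0) m (Or.inr (by rw [hU]; ring))
    rw [h1, fold_eq_self hu0 hu1]
  have hfV : fold V = z 1 := by
    have h1 : fold V = fold (z 1) := by
      rcases hε with rfl | rfl
      · exact fold_eq_of V (z 1) n (Or.inl (by rw [hV]; ring))
      · exact fold_eq_of V (z 1) n (Or.inr (by rw [hV]; ring))
    rw [h1, fold_eq_self hv0 hv1]
  have hbx : |fold X - z 0| ≤ |D| * p := by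
    rw [← hfU]
    refine le_trans (fold_lip X U) ?_
    rw [hX, show U - D*(p:ℝ) - U = -(D*p) by ring, abs_neg, abs_mul, abs_of_nonneg hp0.le]
  have hby : |fold Y - z 1| ≤ |D| * q := by
    rw [← hfV]
    refine le_trans (fold_lip Y V) ?_
    rw [hY, show V + D*(q:ℝ) - V = D*q by ring, abs_mul, abs_of_nonneg hq0.le]
  have hS : (z 0 - fold X)^2 + (z 1 - fold Y)^2 ≤ D^2*N := by
    have e1 : (z 0 - fold X)^2 ≤ D^2*p^2 := by
      have h6 : |fold X - z 0|^2 ≤ (|D| * p)^2 := pow_le_pow_left₀ (abs_nonneg _) hbx 2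
      calc (z 0 - fold X)^2 = |fold X - z 0|^2 := by rw [sq_abs]; ring
        _ ≤ (|D| * p)^2 := h6
        _ = D^2*p^2 := by rw [mul_pow, sq_abs]
    have e2 : (z 1 - fold Y)^2 ≤ D^2*q^2 := by
      have h6 : |fold Y - z 1|^2 ≤ (|D| * q)^2 := pow_le_pow_left₀ (abs_nonneg _) hby 2
      calc (z 1 - fold Y)^2 = |fold Y - z 1|^2 := by rw [sq_abs]; ring
        _ ≤ (|D| * q)^2 := h6
        _ = D^2*q^2 := by rw [mul_pow, sq_abs]
    have h7 : D^2*((p:ℝ)^2+(q:ℝ)^2) = D^2*(p:ℝ)^2 + D^2*(q:ℝ)^2 := by ring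
    rw [hNdef]
    linarith [e1, e2]
  have hDn : D^2*N ≤ 1/(4*N) := by
    have hη2 : η^2 ≤ 1/4 := by
      calc η^2 = |η|^2 := (sq_abs η).symm
        _ ≤ (1/2)^2 := pow_le_pow_left₀ (abs_nonneg η) hηle 2
        _ = 1/4 := by norm_num
    have hEq : D^2*N = η^2/N := by rw [hD]; field_simp
    rw [hEq, div_le_div_iff₀ hN0 (by positivity)]
    calc η^2 * (4*N) ≤ (1/4)*(4*N) := mul_le_mul_of_nonneg_right hη2 (by positivity)
      _ = 1*N := by ring
  have hdist : dist z (pt (fold X') (fold Y')) ≤ 1/(2*Real.sqrt N) := by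
    rw [dist_pt, hfX, hfY]
    have h4 : Real.sqrt (1/(4*N)) = 1/(2*Real.sqrt N) := by
      rw [show 1/(4*N) = (1/(2*Real.sqrt N))^2 by
        rw [div_pow, one_pow, mul_pow, Real.sq_sqrt hN0.le]; norm_num]
      exact Real.sqrt_sq (by positivity)
    calc Real.sqrt ((z 0 - fold X)^2 + (z 1 - fold Y)^2)
        ≤ Real.sqrt (1/(4*N)) := Real.sqrt_le_sqrt (le_trans hS hDn)
      _ = 1/(2*Real.sqrt N) := h4
  linarith

lemma fold_branch' (t : ℝ) : ∃ (ε:ℝ)(k:ℤ), (ε = 1 ∨ ε = -1) ∧ ε * fold t = t + 2*k := by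
  rcases fold_branch t with ⟨k, hk⟩ | ⟨k, hk⟩
  · exact ⟨1, k, Or.inl rfl, by rw [one_mul, hk]⟩
  · exact ⟨-1, -k, Or.inr rfl, by push_cast; linarith [hk]⟩

lemma lower_bound (p q : ℕ) (hp : 0 < p) (hq : 0 < q) (a r : ℝ) (hr : 0 < r)
    (hna : ¬ ∃ m : ℤ, (p:ℝ) * a = m)
    (hcov : unitSquare ⊆ Metric.thickening r (billiardOrbit a p q)) :
    1 / (4 * r^2) < ((p:ℝ)^2 + (q:ℝ)^2) := by
  have hp0 : (0:ℝ) < p := by exact_mod_cast hp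
  have hq0 : (0:ℝ) < q := by exact_mod_cast hq
  obtain ⟨θ, hθdef⟩ : ∃ θ:ℝ, θ = Int.fract ((p:ℝ)*a) := ⟨_, rfl⟩
  obtain ⟨F, hFdef⟩ : ∃ F:ℤ, F = ⌊(p:ℝ)*a⌋ := ⟨_, rfl⟩
  have hFθ : (F:ℝ) + θ = (p:ℝ)*a := by rw [hθdef, hFdef]; exact Int.floor_add_fract _
  have hθ0 : 0 < θ := by
    rcases lt_or_eq_of_le (hθdef ▸ Int.fract_nonneg ((p:ℝ)*a)) with h | h
    · exact h
    · exact absurd ⟨F, by rw [← hFθ, ← h]; ring⟩ hna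
  have hθ1 : θ < 1 := hθdef ▸ Int.fract_lt_one _
  obtain ⟨t', ht'⟩ : ∃ t':ℤ, t' = if (Even F ↔ 1/2 ≤ θ) then 0 else 1 := ⟨_, rfl⟩
  have ht01 : t' = 0 ∨ t' = 1 := by rw [ht']; split <;> simp
  have ht0 : (0:ℝ) ≤ (t':ℝ) ∧ (t':ℝ) ≤ 1 := by
    rcases ht01 with h|h <;> rw [h] <;> norm_num
  obtain ⟨u, hu⟩ : ∃ u:ℝ, u = t'/p := ⟨_, rfl⟩
  have hpu : (p:ℝ)*u = t' := by rw [hu]; field_simp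
  have hu0 : 0 ≤ u := by rw [hu]; exact div_nonneg ht0.1 hp0.le
  have hu1 : u ≤ 1 := by
    rw [hu, div_le_one hp0]
    calc (t':ℝ) ≤ 1 := ht0.2
      _ ≤ p := by exact_mod_cast hp
  have hw : pt u 0 ∈ unitSquare := by
    have hpt0 : (pt u 0) 0 = u := by simp [pt]
    have hpt1 : (pt u 0) 1 = 0 := by simp [pt]
    exact ⟨by rw [hpt0]; exact ⟨hu0, hu1⟩, by rw [hpt1]; exact ⟨le_refl 0, zero_le_one⟩⟩
  obtain ⟨z, hz, hdz⟩ := Metric.mem_thickening_iff.mp (hcov hw)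
  obtain ⟨x, y, hy0, hyx, rfl⟩ := hz
  have hqy : (q:ℝ)*y = p*(x-a) := by rw [hyx]; field_simp
  have hline : (p:ℝ)*x - q*y = (p:ℝ)*a := by linear_combination -hqy
  obtain ⟨ε1, k1, hε1, hb1⟩ := fold_branch' x
  obtain ⟨ε2, k2, hε2, hb2⟩ := fold_branch' y
  obtain ⟨e, he, hee⟩ : ∃ e:ℤ, (e = 1 ∨ e = -1) ∧ (e:ℝ) = ε1 := by
    rcases hε1 with h|h
    · exact ⟨1, Or.inl rfl, by rw [h]; norm_num⟩
    · exact ⟨-1, Or.inr rfl, by rw [h]; push_cast; norm_num⟩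
  obtain ⟨J, hJdef⟩ : ∃ J:ℤ, J = F + 2*(p*k1 - q*k2) - e*t' := ⟨_, rfl⟩
  obtain ⟨A, hA⟩ : ∃ A:ℝ, A = fold x - u := ⟨_, rfl⟩
  obtain ⟨B, hB⟩ : ∃ B:ℝ, B = fold y - 0 := ⟨_, rfl⟩
  have hnum : ε1*((p:ℝ)*A) - ε2*((q:ℝ)*B) = θ + (J:ℝ) := by
    rw [hA, hB, hJdef]; push_cast
    linear_combination (p:ℝ)*hb1 - (q:ℝ)*hb2 + hline - hFθ - ε1*hpu + (t':ℝ)*hee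
  have hhalf : 1/2 ≤ |θ + (J:ℝ)| := by
    have hah := abs_helper θ hθ0.le hθ1.le J
    by_cases hE : Even F <;> by_cases hh : 1/2 ≤ θ
    · -- Even F, θ ≥ 1/2 : t' = 0, J even
      have ht'0 : t' = 0 := by rw [ht', if_pos (iff_of_true hE hh)]
      rw [ht'0, mul_zero, sub_zero] at hJdef
      obtain ⟨f, hf⟩ := hE
      have : Even J := ⟨f + (p*k1 - q*k2), by omega⟩
      exact le_trans hh (hah.1 this)
    · have ht'1 : t' = 1 := by rw [ht', if_neg (by tauto)]
      rw [ht'1, mul_one] at hJdef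
      obtain ⟨f, hf⟩ := hE
      have : Odd J := by
        rcases he with rfl | rfl
        · exact ⟨f + (p*k1 - q*k2) - 1, by omega⟩
        · exact ⟨f + (p*k1 - q*k2), by omega⟩
      refine le_trans (by linarith) (hah.2 this)
    · have ht'1 : t' = 1 := by rw [ht', if_neg (by tauto)]
      rw [ht'1, mul_one] at hJdef
      rw [Int.not_even_iff_odd] at hE
      obtain ⟨f, hf⟩ := hE
      have : Even J := by
        rcases he with rfl | rfl
        · exact ⟨f + (p*k1 - q*k2), by omega⟩
        · exact ⟨f + (p*k1 - q*k2) + 1, by omega⟩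
      exact le_trans hh (hah.1 this)
    · have ht'0 : t' = 0 := by rw [ht', if_pos (iff_of_false hE hh)]
      rw [ht'0, mul_zero, sub_zero] at hJdef
      rw [Int.not_even_iff_odd] at hE
      obtain ⟨f, hf⟩ := hE
      have : Odd J := ⟨f + (p*k1 - q*k2), by omega⟩
      refine le_trans (by linarith) (hah.2 this)
  have hε1sq : ε1^2 = 1 := by rcases hε1 with rfl|rfl <;> norm_num
  have hε2sq : ε2^2 = 1 := by rcases hε2 with rfl|rfl <;> norm_num
  have key : (ε1*((p:ℝ)*A) - ε2*((q:ℝ)*B))^2 + (ε1*((q:ℝ)*A) + ε2*((p:ℝ)*B))^2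
      = ((p:ℝ)^2+(q:ℝ)^2)*(A^2+B^2) := by
    rcases hε1 with rfl|rfl <;> rcases hε2 with rfl|rfl <;> ring
  have hCS : (θ + (J:ℝ))^2 ≤ ((p:ℝ)^2+(q:ℝ)^2)*(A^2+B^2) := by
    rw [← hnum]
    linarith [key, sq_nonneg (ε1*((q:ℝ)*A) + ε2*((p:ℝ)*B))]
  have hquarter : 1/4 ≤ (θ + (J:ℝ))^2 := by
    calc (1:ℝ)/4 = (1/2)^2 := by norm_num
      _ ≤ |θ + (J:ℝ)|^2 := pow_le_pow_left₀ (by norm_num) hhalf 2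
      _ = (θ + (J:ℝ))^2 := sq_abs _
  have hdsq : A^2 + B^2 < r^2 := by
    have hpt0 : (pt u 0) 0 = u := by simp [pt]
    have hpt1 : (pt u 0) 1 = 0 := by simp [pt]
    rw [dist_pt, hpt0, hpt1] at hdz
    have hs : Real.sqrt (A^2 + B^2) < r := by
      rw [show A^2 + B^2 = (u - fold x)^2 + (0 - fold y)^2 by rw [hA, hB]; ring]
      exact hdz
    have h9 : Real.sqrt (A^2+B^2)^2 < r^2 := by
      apply pow_lt_pow_left₀ hs (Real.sqrt_nonneg _)
      norm_num
    rwa [Real.sq_sqrt (by positivity)] at h9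
  have hfin : 1/4 < ((p:ℝ)^2+(q:ℝ)^2)*r^2 := by
    have hNpos : (0:ℝ) < (p:ℝ)^2+(q:ℝ)^2 := by positivity
    calc (1:ℝ)/4 ≤ ((p:ℝ)^2+(q:ℝ)^2)*(A^2+B^2) := le_trans hquarter hCS
      _ < ((p:ℝ)^2+(q:ℝ)^2)*r^2 := by exact mul_lt_mul_of_pos_left hdsq hNpos
  rw [div_lt_iff₀ (by positivity)]
  linarith [hfin]

theorem stmt12 (r : ℝ) (hr : 0 < r) (M : ℕ)
    (hM : IsLeast {n : ℕ | 0 < n ∧ 1 / (4 * r ^ 2) < (n : ℝ) ∧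
      ∃ p q : ℕ, 0 < p ∧ 0 < q ∧ Nat.Coprime p q ∧ n = p ^ 2 + q ^ 2} M) :
    (∀ p q : ℕ, 0 < p → 0 < q → Nat.Coprime p q →
      ∀ a : ℝ, a ∈ Set.Ioo (0:ℝ) 1 → (¬ ∃ m : ℤ, (p : ℝ) * a = m) →
      unitSquare ⊆ Metric.thickening r (billiardOrbit a p q) → M ≤ p ^ 2 + q ^ 2) ∧
    ∃ p q : ℕ, 0 < p ∧ 0 < q ∧ Nat.Coprime p q ∧ p ^ 2 + q ^ 2 = M ∧
      unitSquare ⊆ Metric.thickening r (billiardOrbit (1 / (2 * (p : ℝ))) p q) := by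
  obtain ⟨hMmem, hMlb⟩ := hM
  obtain ⟨hMpos, hMgt, p0, q0, hp0, hq0, hcop0, hMeq⟩ := hMmem
  constructor
  · intro p q hp hq hcop a ha hna hcov
    have h := lower_bound p q hp hq a r hr hna hcov
    apply hMlb
    refine ⟨by positivity, ?_, p, q, hp, hq, hcop, rfl⟩
    push_cast
    linarith [h]
  · refine ⟨p0, q0, hp0, hq0, hcop0, hMeq.symm, ?_⟩
    apply cover_of p0 q0 hp0 hq0 hcop0 r hr
    have hc : (M:ℝ) = (p0:ℝ)^2 + (q0:ℝ)^2 := by exact_mod_cast hMeq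
    rw [← hc]
    exact hMgt
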